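/- Let ( , )₀ be a positive definite bilinear form on ℝ[t] and B a multiple Geronimus transform (B(hf,g)=B(f,hg)=(f,g)₀, h monic of degree N) that is quasi-definite with d_n^* ≠ 0 for all n. Then B is positive definite if and only if: (−1)^N d_{n+1}^*/d_n^* > 0 for all n ≥ N; d_{n+1}^*/d_n^* > 0 for n < N even; and d_{n+1}^*/d_n^* < 0 for n < N odd. -/

import Mathlib

open Polynomial

/-- The determinant `d_n^*`: for `n ≥ N` it is the `N × N` determinant
`det (B(P_{n-1-j}, t^q))`, and for `n < N` the analogous `n × n` determinant. -/
noncomputable def dstar (N : ℕ) (B : Polynomial ℝ →ₗ[ℝ] Polynomial ℝ →ₗ[ℝ] ℝ)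
    (P : ℕ → Polynomial ℝ) (n : ℕ) : ℝ :=
  (Matrix.of fun q j : Fin (min N n) => B (P (n - 1 - (j : ℕ))) (X ^ (q : ℕ))).det

open Equiv Finset

noncomputable def Kmat (B : Polynomial ℝ →ₗ[ℝ] Polynomial ℝ →ₗ[ℝ] ℝ) (n : ℕ) :
    Matrix (Fin n) (Fin n) ℝ :=
  Matrix.of fun i j : Fin n => B (X ^ (i : ℕ)) (X ^ (j : ℕ))

lemma expandL (B : Polynomial ℝ →ₗ[ℝ] Polynomial ℝ →ₗ[ℝ] ℝ) {p : Polynomial ℝ} {n : ℕ}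
    (hp : p.natDegree < n) (q : Polynomial ℝ) :
    B p q = ∑ k ∈ Finset.range n, p.coeff k * B (X ^ k) q := by
  conv_lhs => rw [p.as_sum_range' n hp]
  rw [map_sum, LinearMap.sum_apply]
  refine Finset.sum_congr rfl fun k _ => ?_
  rw [← smul_eq_mul, ← C_mul_X_pow_eq_monomial, ← smul_eq_C_mul, map_smul, LinearMap.smul_apply]

lemma expandR (B : Polynomial ℝ →ₗ[ℝ] Polynomial ℝ →ₗ[ℝ] ℝ) {p : Polynomial ℝ} {n : ℕ}
    (hp : p.natDegree < n) (q : Polynomial ℝ) :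
    B q p = ∑ k ∈ Finset.range n, p.coeff k * B q (X ^ k) := by
  conv_lhs => rw [p.as_sum_range' n hp]
  rw [map_sum]
  refine Finset.sum_congr rfl fun k _ => ?_
  rw [← smul_eq_mul, ← C_mul_X_pow_eq_monomial, ← smul_eq_C_mul, map_smul, smul_eq_mul]

section Q
variable (B : Polynomial ℝ →ₗ[ℝ] Polynomial ℝ →ₗ[ℝ] ℝ)

/-- The monic `B`-orthogonal polynomial of degree `n` (assuming quasi-definiteness). -/
noncomputable def Qp (n : ℕ) : Polynomial ℝ :=
  X ^ n - ∑ i : Fin n,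
    ((Kmat B n)⁻¹.mulVec (fun i : Fin n => B (X ^ (i : ℕ)) (X ^ n))) i • X ^ (i : ℕ)

lemma Qp_coeff_n (n : ℕ) : (Qp B n).coeff n = 1 := by
  simp only [Qp, coeff_sub, coeff_X_pow, if_pos rfl]
  rw [finset_sum_coeff]
  have h : ∀ i : Fin n, (((Kmat B n)⁻¹.mulVec fun i : Fin n => B (X ^ (i : ℕ)) (X ^ n)) i •
      (X ^ (i : ℕ) : Polynomial ℝ)).coeff n = 0 := by
    intro i
    rw [coeff_smul, coeff_X_pow, if_neg (Nat.ne_of_lt i.2).symm, smul_zero]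
  rw [Finset.sum_congr rfl fun i _ => h i, Finset.sum_const_zero]
  simp

lemma Qp_natDegree_le (n : ℕ) : (Qp B n).natDegree ≤ n := by
  refine (natDegree_sub_le _ _).trans (max_le (by simp) ?_)
  refine natDegree_sum_le_of_forall_le _ _ fun i _ => ?_
  exact (natDegree_smul_le _ _).trans (by simp [i.2.le])

lemma Qp_ne_zero (n : ℕ) : Qp B n ≠ 0 := fun hq => by
  have := Qp_coeff_n B n
  rw [hq] at this; simp at this

end Q

lemma Qp_orth {n : ℕ} (hK : (Kmat B n).det ≠ 0) (i : Fin n) :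
    B (X ^ (i : ℕ)) (Qp B n) = 0 := by
  set b : Fin n → ℝ := fun j : Fin n => B (X ^ (j : ℕ)) (X ^ n) with hb
  have key : B (X ^ (i : ℕ)) (Qp B n)
      = b i - Matrix.mulVec (Kmat B n) (Matrix.mulVec (Kmat B n)⁻¹ b) i := by
    simp only [Qp, map_sub, map_sum, map_smul, smul_eq_mul]
    congr 1
    rw [Matrix.mulVec, dotProduct]
    exact Finset.sum_congr rfl fun j _ => by rw [mul_comm]; rfl
  rw [key, Matrix.mulVec_mulVec, Matrix.mul_nonsing_inv _ (isUnit_iff_ne_zero.2 hK),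
    Matrix.one_mulVec, sub_self]

lemma Qp_orth' {n : ℕ} (hK : (Kmat B n).det ≠ 0) {p : Polynomial ℝ}
    (hp : p.natDegree < n) : B p (Qp B n) = 0 := by
  rw [expandL B hp]
  refine Finset.sum_eq_zero fun k hk => ?_
  have : B (X ^ k) (Qp B n) = 0 := Qp_orth hK ⟨k, Finset.mem_range.1 hk⟩
  rw [this, mul_zero]

lemma B_Qp_Qp {n : ℕ} (hK : (Kmat B n).det ≠ 0) :
    B (Qp B n) (Qp B n) = B (X ^ n) (Qp B n) := by
  rw [← sub_eq_zero, ← LinearMap.sub_apply, ← map_sub]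
  have h2 : Qp B n - X ^ n
      = -(∑ i : Fin n, ((Kmat B n)⁻¹.mulVec (fun i : Fin n => B (X ^ (i : ℕ)) (X ^ n))) i
          • X ^ (i : ℕ)) := by
    rw [Qp]; ring
  rw [h2, map_neg, map_sum, LinearMap.neg_apply, LinearMap.sum_apply, neg_eq_zero]
  refine Finset.sum_eq_zero fun i _ => ?_
  rw [map_smul, LinearMap.smul_apply, Qp_orth hK i, smul_zero]

lemma Kdet_succ {n : ℕ} (hK : (Kmat B n).det ≠ 0) :
    (Kmat B (n + 1)).det = (Kmat B n).det * B (Qp B n) (Qp B n) := by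
  classical
  haveI : Invertible (Kmat B n) :=
    (Kmat B n).invertibleOfIsUnitDet (isUnit_iff_ne_zero.2 hK)
  set e : Fin n ⊕ Fin 1 ≃ Fin (n + 1) := finSumFinEquiv with he
  set Bb : Matrix (Fin n) (Fin 1) ℝ := Matrix.of fun i _ => B (X ^ (i : ℕ)) (X ^ n) with hBb
  set Cb : Matrix (Fin 1) (Fin n) ℝ := Matrix.of fun _ j => B (X ^ n) (X ^ (j : ℕ)) with hCb
  set D : Matrix (Fin 1) (Fin 1) ℝ := Matrix.of fun _ _ => B (X ^ n) (X ^ n) with hD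
  have hsub : (Kmat B (n + 1)).submatrix e e = Matrix.fromBlocks (Kmat B n) Bb Cb D := by
    ext i j
    rcases i with i | i <;> rcases j with j | j <;>
      simp [Kmat, he, hBb, hCb, hD, Matrix.fromBlocks, Fin.val_eq_zero]
  have hdet : (Kmat B (n + 1)).det = (Matrix.fromBlocks (Kmat B n) Bb Cb D).det := by
    rw [← hsub, Matrix.det_submatrix_equiv_self]
  rw [hdet, Matrix.det_fromBlocks₁₁, Matrix.det_fin_one]
  congr 1
  rw [B_Qp_Qp hK]
  have hexp : B (X ^ n) (Qp B n) = B (X ^ n) (X ^ n)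
      - ∑ i : Fin n, ((Kmat B n)⁻¹.mulVec (fun i : Fin n => B (X ^ (i : ℕ)) (X ^ n))) i
          * B (X ^ n) (X ^ (i : ℕ)) := by
    rw [Qp, map_sub, map_sum]
    simp only [map_smul, smul_eq_mul]
  rw [hexp]
  simp only [Matrix.sub_apply, Matrix.mul_apply, Matrix.invOf_eq_nonsing_inv]
  rw [show D 0 0 = B (X ^ n) (X ^ n) from rfl]
  congr 1
  simp only [Matrix.mulVec, dotProduct, Finset.sum_mul]
  rw [Finset.sum_comm]
  refine Finset.sum_congr rfl fun j _ => Finset.sum_congr rfl fun x _ => ?_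
  simp only [hBb, hCb, Matrix.of_apply]
  ring

lemma posdef_iff_ratios (hsym : ∀ f g, B f g = B g f)
    (hK : ∀ n, (Kmat B n).det ≠ 0) :
    (∀ q : Polynomial ℝ, q ≠ 0 → 0 < B q q) ↔
      ∀ n : ℕ, 0 < (Kmat B (n + 1)).det / (Kmat B n).det := by
  have hratio : ∀ n, (Kmat B (n + 1)).det / (Kmat B n).det = B (Qp B n) (Qp B n) := by
    intro n
    rw [Kdet_succ (hK n), mul_comm, mul_div_assoc, div_self (hK n), mul_one]
  constructor
  · intro hpos n
    rw [hratio n]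
    exact hpos _ (Qp_ne_zero B n)
  · intro hr
    have hQpos : ∀ n, 0 < B (Qp B n) (Qp B n) := fun n => hratio n ▸ hr n
    have main : ∀ m, ∀ q : Polynomial ℝ, q ≠ 0 → q.natDegree < m → 0 < B q q := by
      intro m
      induction m with
      | zero => exact fun q hq h => absurd h (Nat.not_lt_zero _)
      | succ m ih =>
        intro q hq hdeg
        by_cases hc : q.coeff m = 0
        · refine ih q hq ?_
          rcases Nat.lt_succ_iff_lt_or_eq.1 hdeg with h | h
          · exact h
          · have hl := Polynomial.leadingCoeff_ne_zero.2 hq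
            rw [Polynomial.leadingCoeff, h] at hl
            exact absurd hc hl
        · set a := q.coeff m with ha
          set r := q - a • Qp B m with hrdef
          have hra : q = a • Qp B m + r := by rw [hrdef]; ring
          have hrm : r.coeff m = 0 := by
            rw [hrdef, Polynomial.coeff_sub, Polynomial.coeff_smul, Qp_coeff_n B m,
              smul_eq_mul, mul_one, ← ha, sub_self]
          have hrdeg : r ≠ 0 → r.natDegree < m := by
            intro hr0
            have h1 : r.natDegree ≤ m := by
              rw [hrdef]
              refine (Polynomial.natDegree_sub_le _ _).trans (max_le (by omega) ?_)
              exact (Polynomial.natDegree_smul_le _ _).trans (Qp_natDegree_le B m)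
            rcases Nat.lt_or_ge r.natDegree m with h | h
            · exact h
            · have : r.natDegree = m := le_antisymm h1 h
              have hl := Polynomial.leadingCoeff_ne_zero.2 hr0
              rw [Polynomial.leadingCoeff, this] at hl
              exact absurd hrm hl
          have hBrQ : B r (Qp B m) = 0 := by
            by_cases hr0 : r = 0
            · simp [hr0]
            · exact Qp_orth' (hK m) (hrdeg hr0)
          have hBQr : B (Qp B m) r = 0 := by rw [hsym]; exact hBrQ
          have hBqq : B q q = a * a * B (Qp B m) (Qp B m) + B r r := by
            conv_lhs => rw [hra]
            simp only [map_add, map_smul, LinearMap.add_apply, LinearMap.smul_apply,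
              smul_eq_mul]
            rw [hBrQ, hBQr]
            ring
          have hrr : 0 ≤ B r r := by
            by_cases hr0 : r = 0
            · simp [hr0]
            · exact le_of_lt (ih r hr0 (hrdeg hr0))
          have hapos : 0 < a * a * B (Qp B m) (Qp B m) :=
            mul_pos (mul_self_pos.2 hc) (hQpos m)
          rw [hBqq]
          linarith
    exact fun q hq => main (q.natDegree + 1) q hq (Nat.lt_succ_self _)

/-- Gram determinant is invariant under change to monic triangular bases. -/
lemma det_gram_change (B : Polynomial ℝ →ₗ[ℝ] Polynomial ℝ →ₗ[ℝ] ℝ) (u v : ℕ → Polynomial ℝ)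
    (humonic : ∀ i, (u i).Monic) (hudeg : ∀ i, (u i).natDegree = i)
    (hvmonic : ∀ i, (v i).Monic) (hvdeg : ∀ i, (v i).natDegree = i) (n : ℕ) :
    (Matrix.of fun i j : Fin n => B (u (i : ℕ)) (v (j : ℕ))).det = (Kmat B n).det := by
  classical
  set T : Matrix (Fin n) (Fin n) ℝ := Matrix.of fun i k : Fin n => (u (i : ℕ)).coeff k with hT
  set S : Matrix (Fin n) (Fin n) ℝ := Matrix.of fun j l : Fin n => (v (j : ℕ)).coeff l with hS
  have hprod : (Matrix.of fun i j : Fin n => B (u (i : ℕ)) (v (j : ℕ)))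
      = T * Kmat B n * S.transpose := by
    ext i j
    simp only [Matrix.of_apply, Matrix.mul_apply, Matrix.transpose_apply, Finset.sum_mul]
    rw [expandL B (show (u (i : ℕ)).natDegree < n by rw [hudeg]; exact i.2) (v (j : ℕ))]
    rw [← Fin.sum_univ_eq_sum_range]
    conv_rhs => rw [Finset.sum_comm]
    refine Finset.sum_congr rfl fun k _ => ?_
    rw [expandR B (show (v (j : ℕ)).natDegree < n by rw [hvdeg]; exact j.2) (X ^ (k : ℕ)),
      ← Fin.sum_univ_eq_sum_range, Finset.mul_sum]
    refine Finset.sum_congr rfl fun l _ => ?_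
    simp only [hT, hS, Kmat, Matrix.of_apply]
    ring
  have hdetT : T.det = 1 := by
    have htri : T.BlockTriangular OrderDual.toDual := by
      intro i j hij
      simp only [hT, Matrix.of_apply]
      exact Polynomial.coeff_eq_zero_of_natDegree_lt (by rw [hudeg]; exact hij)
    rw [Matrix.det_of_lowerTriangular T htri]
    refine Finset.prod_eq_one fun i _ => ?_
    have := (humonic (i : ℕ)).coeff_natDegree
    rw [hudeg] at this
    simpa [hT] using this
  have hdetS : S.det = 1 := by
    have htri : S.BlockTriangular OrderDual.toDual := by
      intro i j hij
      simp only [hS, Matrix.of_apply]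
      exact Polynomial.coeff_eq_zero_of_natDegree_lt (by rw [hvdeg]; exact hij)
    rw [Matrix.det_of_lowerTriangular S htri]
    refine Finset.prod_eq_one fun i _ => ?_
    have := (hvmonic (i : ℕ)).coeff_natDegree
    rw [hvdeg] at this
    simpa [hS] using this
  rw [hprod, Matrix.det_mul, Matrix.det_mul, hdetT, Matrix.det_transpose, hdetS,
    one_mul, mul_one]

lemma finRotate_val (m : ℕ) (y : Fin (m + 1)) :
    (finRotate (m + 1) y : ℕ) = (y.val + 1) % (m + 1) := by
  rw [finRotate_succ_apply, Fin.val_add, Fin.val_one']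
  conv_rhs => rw [Nat.add_mod]
  rw [Nat.mod_eq_of_lt y.2]

lemma rot_pow_val (m k : ℕ) (x : Fin (m + 1)) :
    (((finRotate (m + 1)) ^ k) x : ℕ) = (x.val + k) % (m + 1) := by
  have hrot := finRotate_val m
  induction k generalizing x with
  | zero => simp [Nat.mod_eq_of_lt x.2]
  | succ k ih =>
    rw [pow_succ, Equiv.Perm.mul_apply, ih, hrot, Nat.mod_add_mod]
    congr 1
    omega

noncomputable def revsgn (m : ℕ) : ℝ :=
  ((Equiv.Perm.sign (Fin.revPerm : Equiv.Perm (Fin m)) : ℤ) : ℝ)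

lemma revsgn_sq (m : ℕ) : revsgn m * revsgn m = 1 := by
  unfold revsgn
  rcases Int.units_eq_one_or (Equiv.Perm.sign (Fin.revPerm : Equiv.Perm (Fin m))) with h | h <;>
    rw [h] <;> norm_num

lemma revsgn_ne_zero (m : ℕ) : revsgn m ≠ 0 := by
  intro h
  have := revsgn_sq m
  rw [h, mul_zero] at this
  norm_num at this

/-- The equiv between `Fin m` and the subtype of `Fin (m+1)` of elements `< m`. -/
def castEquiv (m : ℕ) : Fin m ≃ {x : Fin (m + 1) // (x : ℕ) < m} where
  toFun x := ⟨x.castSucc, by simp⟩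
  invFun y := ⟨(y : Fin (m + 1)).val, y.2⟩
  left_inv x := by ext; simp
  right_inv y := by ext; simp

lemma rev_decomp (m : ℕ) :
    (Fin.revPerm : Equiv.Perm (Fin (m + 1))) =
      finRotate (m + 1) * ((Fin.revPerm : Equiv.Perm (Fin m)).extendDomain (castEquiv m)) := by
  ext x
  rw [Equiv.Perm.mul_apply]
  by_cases hx : (x : ℕ) < m
  · rw [Equiv.Perm.extendDomain_apply_subtype Fin.revPerm (castEquiv m) hx]
    have h1 : ((castEquiv m) (Fin.revPerm ((castEquiv m).symm ⟨x, hx⟩)) : Fin (m + 1)).val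
        = m - 1 - (x : ℕ) := by
      simp [castEquiv, Fin.rev]
      omega
    rw [finRotate_val, h1, Nat.mod_eq_of_lt (by omega)]
    simp [Fin.rev]
    omega
  · rw [Equiv.Perm.extendDomain_apply_not_subtype Fin.revPerm (castEquiv m) hx]
    have hxm : (x : ℕ) = m := by omega
    rw [finRotate_val, hxm, Nat.mod_self]
    simp [Fin.rev]
    omega

lemma revsgn_succ (m : ℕ) : revsgn (m + 1) = (-1 : ℝ) ^ m * revsgn m := by
  unfold revsgn
  rw [rev_decomp m, map_mul, sign_finRotate, Equiv.Perm.sign_extendDomain]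
  push_cast
  ring

lemma dstar_eq_det (N : ℕ) (B : Polynomial ℝ →ₗ[ℝ] Polynomial ℝ →ₗ[ℝ] ℝ)
    (P : ℕ → Polynomial ℝ) (n m : ℕ) (hm : min N n = m) :
    dstar N B P n = (Matrix.of fun q j : Fin m =>
      B (P (n - 1 - (j : ℕ))) (X ^ (q : ℕ))).det := by
  subst hm
  rfl

lemma Kdet_low (B : Polynomial ℝ →ₗ[ℝ] Polynomial ℝ →ₗ[ℝ] ℝ)
    (hsym : ∀ f g, B f g = B g f) (P : ℕ → Polynomial ℝ)
    (hPmonic : ∀ n, (P n).Monic) (hPdeg : ∀ n, (P n).natDegree = n)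
    (N n : ℕ) (hn : n ≤ N) :
    (Kmat B n).det = revsgn n * dstar N B P n := by
  set dM : Matrix (Fin n) (Fin n) ℝ :=
    Matrix.of fun q j : Fin n => B (P (n - 1 - (j : ℕ))) (X ^ (q : ℕ)) with hdM
  rw [dstar_eq_det N B P n n (min_eq_right hn)]
  have h1 : (Kmat B n).det
      = (Matrix.of fun i j : Fin n => B (X ^ (i : ℕ)) (P (j : ℕ))).det :=
    (det_gram_change B (fun i => X ^ i) P (fun i => monic_X_pow i)
      (fun i => natDegree_X_pow i) hPmonic hPdeg n).symm
  have h2 : (Matrix.of fun i j : Fin n => B (X ^ (i : ℕ)) (P (j : ℕ)))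
      = dM.submatrix id Fin.revPerm := by
    ext i j
    simp only [hdM, Matrix.submatrix_apply, Matrix.of_apply, id_eq]
    rw [hsym]
    congr 2
    have hrev : ((Fin.revPerm j : Fin n) : ℕ) = n - ((j : ℕ) + 1) := Fin.val_rev j
    have hj := j.2
    exact congrArg P (by omega)
  rw [h1, h2, Matrix.det_permute']
  rfl

lemma Kdet_high (N : ℕ) (hN : 1 ≤ N) (h : Polynomial ℝ) (hmonic : h.Monic)
    (hdeg : h.natDegree = N)
    (B₀ B : Polynomial ℝ →ₗ[ℝ] Polynomial ℝ →ₗ[ℝ] ℝ)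
    (hsym₀ : ∀ f g, B₀ f g = B₀ g f) (hsym : ∀ f g, B f g = B g f)
    (hrel : ∀ f g, B (h * f) g = B₀ f g)
    (P : ℕ → Polynomial ℝ)
    (hPmonic : ∀ n, (P n).Monic) (hPdeg : ∀ n, (P n).natDegree = n)
    (hPorth : ∀ n : ℕ, ∀ q : Polynomial ℝ, q.degree < n → B₀ (P n) q = 0)
    (n : ℕ) (hNn : N ≤ n) :
    (Kmat B n).det = ((-1 : ℝ) ^ (n - 1)) ^ (n - N) * revsgn N
      * (∏ k ∈ Finset.range (n - N), B₀ (P k) (P k)) * dstar N B P n := by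
  classical
  obtain ⟨m, rfl⟩ : ∃ m, n = m + 1 := ⟨n - 1, by omega⟩
  set n := m + 1
  -- the mixed basis
  set u : ℕ → Polynomial ℝ := fun i => if i < N then X ^ i else h * P (i - N) with hu
  have humonic : ∀ i, (u i).Monic := by
    intro i
    by_cases hi : i < N
    · simp only [hu, if_pos hi]; exact monic_X_pow i
    · simp only [hu, if_neg hi]; exact hmonic.mul (hPmonic _)
  have hudeg : ∀ i, (u i).natDegree = i := by
    intro i
    by_cases hi : i < N
    · simp only [hu, if_pos hi]; exact natDegree_X_pow i
    · simp only [hu, if_neg hi]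
      rw [hmonic.natDegree_mul (hPmonic _), hdeg, hPdeg]; omega
  set G : Matrix (Fin n) (Fin n) ℝ :=
    Matrix.of fun i j : Fin n => B (u (i : ℕ)) (P (j : ℕ)) with hG
  have hKG : (Kmat B n).det = G.det :=
    (det_gram_change B u P humonic hudeg hPmonic hPdeg n).symm
  set ρ : Equiv.Perm (Fin n) := (finRotate n) ^ (n - N) with hρ
  have hρval : ∀ y : Fin n, ((ρ y : Fin n) : ℕ) = (y.val + (n - N)) % n := fun y =>
    rot_pow_val m (n - N) y
  have hρsgn : ((Equiv.Perm.sign ρ : ℤ) : ℝ) = ((-1 : ℝ) ^ m) ^ (n - N) := by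
    rw [hρ, map_pow, sign_finRotate]
    push_cast
    rfl
  set G' : Matrix (Fin n) (Fin n) ℝ := G.submatrix id ρ with hG'
  have hdetG' : G'.det = ((Equiv.Perm.sign ρ : ℤ) : ℝ) * G.det := by
    rw [hG', Matrix.det_permute']
  set e : Fin N ⊕ Fin (n - N) ≃ Fin n := finSumFinEquiv.trans (finCongr (by omega)) with he
  have he1 : ∀ a : Fin N, ((e (Sum.inl a) : Fin n) : ℕ) = (a : ℕ) := by
    intro a; simp [he]
  have he2 : ∀ b : Fin (n - N), ((e (Sum.inr b) : Fin n) : ℕ) = N + (b : ℕ) := by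
    intro b; simp [he]
  set A : Matrix (Fin N) (Fin N) ℝ :=
    Matrix.of fun a a' : Fin N => B (P (n - N + (a' : ℕ))) (X ^ (a : ℕ)) with hA
  set Bb : Matrix (Fin N) (Fin (n - N)) ℝ :=
    Matrix.of fun a b => B (X ^ (a : ℕ)) (P (b : ℕ)) with hBb
  set Dd : Matrix (Fin (n - N)) (Fin (n - N)) ℝ :=
    Matrix.diagonal (fun b : Fin (n - N) => B₀ (P (b : ℕ)) (P (b : ℕ))) with hDd
  have hcol1 : ∀ a' : Fin N, ((ρ (e (Sum.inl a')) : Fin n) : ℕ) = n - N + (a' : ℕ) := by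
    intro a'
    rw [hρval, he1, Nat.mod_eq_of_lt (by omega)]
    omega
  have hcol2 : ∀ b : Fin (n - N), ((ρ (e (Sum.inr b)) : Fin n) : ℕ) = (b : ℕ) := by
    intro b
    rw [hρval, he2]
    have hb := b.2
    have : N + (b : ℕ) + (n - N) = n + (b : ℕ) := by omega
    rw [this, Nat.add_mod_left, Nat.mod_eq_of_lt (by omega)]
  have hblocks : G'.submatrix e e = Matrix.fromBlocks A Bb 0 Dd := by
    ext i j
    rcases i with a | b <;> rcases j with a' | b'
    · -- top-left
      simp only [Matrix.submatrix_apply, hG', hG, Matrix.of_apply, Matrix.fromBlocks_apply₁₁,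
        id_eq]
      rw [he1, hcol1]
      simp only [hu, if_pos a.2]
      rw [hA, Matrix.of_apply, hsym]
    · -- top-right
      simp only [Matrix.submatrix_apply, hG', hG, Matrix.of_apply, Matrix.fromBlocks_apply₁₂,
        id_eq]
      rw [he1, hcol2]
      simp only [hu, if_pos a.2]
      rfl
    · -- bottom-left : zero
      simp only [Matrix.submatrix_apply, hG', hG, Matrix.of_apply, Matrix.fromBlocks_apply₂₁,
        id_eq, Matrix.zero_apply]
      rw [he2, hcol1]
      simp only [hu]
      rw [if_neg (by omega), show N + (b : ℕ) - N = (b : ℕ) by omega, hrel, hsym₀]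
      have hb := b.2
      refine hPorth _ _ ?_
      rw [Polynomial.degree_eq_natDegree (hPmonic (b : ℕ)).ne_zero, hPdeg]
      exact_mod_cast (by omega : (b : ℕ) < n - N + (a' : ℕ))
    · -- bottom-right : diagonal
      simp only [Matrix.submatrix_apply, hG', hG, Matrix.of_apply, Matrix.fromBlocks_apply₂₂,
        id_eq]
      rw [he2, hcol2]
      simp only [hu]
      rw [if_neg (by omega), show N + (b : ℕ) - N = (b : ℕ) by omega, hrel]
      rcases eq_or_ne b b' with rfl | hbb
      · rw [hDd, Matrix.diagonal_apply_eq]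
      · rw [hDd, Matrix.diagonal_apply_ne _ hbb]
        rcases Nat.lt_or_ge (b : ℕ) (b' : ℕ) with hlt | hge
        · rw [hsym₀]
          refine hPorth _ _ ?_
          rw [Polynomial.degree_eq_natDegree (hPmonic (b : ℕ)).ne_zero, hPdeg]
          exact_mod_cast hlt
        · have hlt : (b' : ℕ) < (b : ℕ) := by
            rcases Nat.lt_or_ge (b' : ℕ) (b : ℕ) with h' | h'
            · exact h'
            · exact absurd (Fin.ext (le_antisymm h' hge)) hbb
          refine hPorth _ _ ?_
          rw [Polynomial.degree_eq_natDegree (hPmonic (b' : ℕ)).ne_zero, hPdeg]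
          exact_mod_cast hlt
  have hdetblocks : G'.det = A.det * Dd.det := by
    rw [← Matrix.det_submatrix_equiv_self e G', hblocks, Matrix.det_fromBlocks_zero₂₁]
  have hDddet : Dd.det = ∏ k ∈ Finset.range (n - N), B₀ (P k) (P k) := by
    rw [hDd, Matrix.det_diagonal]
    exact Fin.prod_univ_eq_prod_range (fun k => B₀ (P k) (P k)) (n - N)
  have hAdet : A.det = revsgn N * dstar N B P n := by
    set dM : Matrix (Fin N) (Fin N) ℝ :=
      Matrix.of fun q j : Fin N => B (P (n - 1 - (j : ℕ))) (X ^ (q : ℕ)) with hdM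
    have hds : dstar N B P n = dM.det := dstar_eq_det N B P n N (min_eq_left hNn)
    have hAd : A = dM.submatrix id Fin.revPerm := by
      ext q j
      simp only [hA, hdM, Matrix.submatrix_apply, Matrix.of_apply, id_eq]
      have hrev : ((Fin.revPerm j : Fin N) : ℕ) = N - ((j : ℕ) + 1) := Fin.val_rev j
      have hj := j.2
      congr 2
      exact congrArg P (by omega)
    rw [hAd, Matrix.det_permute', hds]
    rfl
  -- assemble
  have hsq : ((-1 : ℝ) ^ m) ^ (n - N) * ((-1 : ℝ) ^ m) ^ (n - N) = 1 := by
    rw [← mul_pow, ← pow_add, Even.neg_one_pow ⟨m, rfl⟩, one_pow]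
  have hfinal : ((Equiv.Perm.sign ρ : ℤ) : ℝ) * (Kmat B n).det = A.det * Dd.det := by
    rw [hKG, ← hdetG', hdetblocks]
  have : (Kmat B n).det = ((-1 : ℝ) ^ m) ^ (n - N) * (A.det * Dd.det) := by
    have := congrArg (fun x => ((-1 : ℝ) ^ m) ^ (n - N) * x) hfinal
    rw [hρsgn, ← mul_assoc, hsq, one_mul] at this
    exact this
  rw [this, hAdet, hDddet, show n - 1 = m by omega]
  ring

theorem positive_definite_iff_sign_conditions (N : ℕ) (hN : 1 ≤ N)
    (h : Polynomial ℝ) (hmonic : h.Monic) (hdeg : h.natDegree = N)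
    (B₀ B : Polynomial ℝ →ₗ[ℝ] Polynomial ℝ →ₗ[ℝ] ℝ)
    (hsym₀ : ∀ f g, B₀ f g = B₀ g f) (hsym : ∀ f g, B f g = B g f)
    (hpos₀ : ∀ q : Polynomial ℝ, q ≠ 0 → 0 < B₀ q q)
    (hrel : ∀ f g, B (h * f) g = B₀ f g) (hrel' : ∀ f g, B f (h * g) = B₀ f g)
    (P : ℕ → Polynomial ℝ)
    (hPmonic : ∀ n, (P n).Monic) (hPdeg : ∀ n, (P n).natDegree = n)
    (hPorth : ∀ n : ℕ, ∀ q : Polynomial ℝ, q.degree < n → B₀ (P n) q = 0)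
    (hdstar : ∀ n : ℕ, dstar N B P n ≠ 0) :
    (∀ q : Polynomial ℝ, q ≠ 0 → 0 < B q q) ↔
      ((∀ n : ℕ, N ≤ n → 0 < (-1 : ℝ) ^ N * (dstar N B P (n + 1) / dstar N B P n)) ∧
       (∀ n : ℕ, n < N → Even n → 0 < dstar N B P (n + 1) / dstar N B P n) ∧
       (∀ n : ℕ, n < N → Odd n → dstar N B P (n + 1) / dstar N B P n < 0)) := by
  classical
  have hκ : ∀ k : ℕ, 0 < B₀ (P k) (P k) := fun k => hpos₀ _ (hPmonic k).ne_zero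
  have hKlow : ∀ n, n ≤ N → (Kmat B n).det = revsgn n * dstar N B P n :=
    fun n hn => Kdet_low B hsym P hPmonic hPdeg N n hn
  have hKhigh : ∀ n, N ≤ n → (Kmat B n).det = ((-1 : ℝ) ^ (n - 1)) ^ (n - N) * revsgn N
      * (∏ k ∈ Finset.range (n - N), B₀ (P k) (P k)) * dstar N B P n :=
    fun n hn => Kdet_high N hN h hmonic hdeg B₀ B hsym₀ hsym hrel P hPmonic hPdeg hPorth n hn
  have hprodpos : ∀ n : ℕ, 0 < ∏ k ∈ Finset.range n, B₀ (P k) (P k) :=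
    fun n => Finset.prod_pos fun k _ => hκ k
  have hKne : ∀ n, (Kmat B n).det ≠ 0 := by
    intro n
    rcases le_or_gt n N with hn | hn
    · rw [hKlow n hn]; exact mul_ne_zero (revsgn_ne_zero n) (hdstar n)
    · rw [hKhigh n hn.le]
      refine mul_ne_zero (mul_ne_zero (mul_ne_zero ?_ (revsgn_ne_zero N))
        (ne_of_gt (hprodpos _))) (hdstar n)
      exact pow_ne_zero _ (pow_ne_zero _ (by norm_num))
  have hfacthigh : ∀ n, N ≤ n → (Kmat B (n + 1)).det / (Kmat B n).det
      = B₀ (P (n - N)) (P (n - N))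
        * ((-1 : ℝ) ^ N * (dstar N B P (n + 1) / dstar N B P n)) := by
    intro n hn
    have hb2 : ((-1 : ℝ) ^ (n - 1)) ^ (n - N) * ((-1 : ℝ) ^ (n - 1)) ^ (n - N) = 1 := by
      rw [← mul_pow, ← pow_add, Even.neg_one_pow ⟨n - 1, rfl⟩, one_pow]
    have hsgnprod : ((-1 : ℝ) ^ n) ^ (n - N + 1) * ((-1 : ℝ) ^ (n - 1)) ^ (n - N)
        = (-1 : ℝ) ^ N := by
      obtain ⟨N', rfl⟩ : ∃ N', N = N' + 1 := ⟨N - 1, by omega⟩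
      obtain ⟨k, rfl⟩ : ∃ k, n = N' + 1 + k := ⟨n - (N' + 1), by omega⟩
      rw [show N' + 1 + k - (N' + 1) = k by omega, show N' + 1 + k - 1 = N' + k by omega]
      rw [← pow_mul, ← pow_mul, ← pow_add,
        show (N' + 1 + k) * (k + 1) + (N' + k) * k = 2 * (N' * k + k * k + k) + (N' + 1)
          by ring,
        pow_add, pow_mul, neg_one_sq, one_pow, one_mul]
    have haeq : ((-1 : ℝ) ^ n) ^ (n - N + 1)
        = (-1 : ℝ) ^ N * ((-1 : ℝ) ^ (n - 1)) ^ (n - N) := by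
      calc ((-1 : ℝ) ^ n) ^ (n - N + 1)
          = ((-1 : ℝ) ^ n) ^ (n - N + 1)
            * (((-1 : ℝ) ^ (n - 1)) ^ (n - N) * ((-1 : ℝ) ^ (n - 1)) ^ (n - N)) := by
            rw [hb2, mul_one]
        _ = (((-1 : ℝ) ^ n) ^ (n - N + 1) * ((-1 : ℝ) ^ (n - 1)) ^ (n - N))
            * ((-1 : ℝ) ^ (n - 1)) ^ (n - N) := by ring
        _ = (-1 : ℝ) ^ N * ((-1 : ℝ) ^ (n - 1)) ^ (n - N) := by rw [hsgnprod]
    have e1 : (Kmat B (n + 1)).det = ((-1 : ℝ) ^ n) ^ (n - N + 1) * revsgn N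
        * ((∏ k ∈ Finset.range (n - N), B₀ (P k) (P k)) * B₀ (P (n - N)) (P (n - N)))
        * dstar N B P (n + 1) := by
      rw [hKhigh (n + 1) (by omega), show n + 1 - 1 = n by omega,
        show n + 1 - N = n - N + 1 by omega, Finset.prod_range_succ]
    have hd0 : dstar N B P n ≠ 0 := hdstar n
    have hs : revsgn N ≠ 0 := revsgn_ne_zero N
    have hp0 : (∏ k ∈ Finset.range (n - N), B₀ (P k) (P k)) ≠ 0 := ne_of_gt (hprodpos _)
    have hb0 : ((-1 : ℝ) ^ (n - 1)) ^ (n - N) ≠ 0 := pow_ne_zero _ (pow_ne_zero _ (by norm_num))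
    rw [e1, hKhigh n hn, haeq]
    field_simp
  have hfactlow : ∀ n, n < N → (Kmat B (n + 1)).det / (Kmat B n).det
      = (-1 : ℝ) ^ n * (dstar N B P (n + 1) / dstar N B P n) := by
    intro n hn
    rw [hKlow (n + 1) (by omega), hKlow n (by omega), revsgn_succ]
    have hd0 : dstar N B P n ≠ 0 := hdstar n
    have hs : revsgn n ≠ 0 := revsgn_ne_zero n
    field_simp
  rw [posdef_iff_ratios hsym hKne]
  constructor
  · intro hr
    refine ⟨fun n hn => ?_, fun n hn hev => ?_, fun n hn hodd => ?_⟩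
    · have hthis := hr n
      rw [hfacthigh n hn] at hthis
      nlinarith [hκ (n - N)]
    · have hthis := hr n
      rw [hfactlow n hn, Even.neg_one_pow hev, one_mul] at hthis
      exact hthis
    · have hthis := hr n
      rw [hfactlow n hn, Odd.neg_one_pow hodd] at hthis
      linarith
  · rintro ⟨h1, h2, h3⟩ n
    rcases Nat.lt_or_ge n N with hn | hn
    · rcases Nat.even_or_odd n with hev | hodd
      · rw [hfactlow n hn, Even.neg_one_pow hev, one_mul]
        exact h2 n hn hev
      · rw [hfactlow n hn, Odd.neg_one_pow hodd]
        have := h3 n hn hodd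
        linarith
    · rw [hfacthigh n hn]
      exact mul_pos (hκ _) (h1 n hn)
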